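/- Let n ≥ 2 and let p(X) = ∏_{i=1}^n (X − a_i) be a monic polynomial with real coefficients whose complex roots a_1, …, a_n satisfy ∏_{i=1}^n a_i = 1. Suppose ℓ(p) = 2·log(M(p)) and |a_i| ≠ 1 for at least one index i. Then there exists a real number α > 1 such that the multiset of moduli {|a_1|, …, |a_n|} consists of α, α^{-1}, and (n−2) copies of 1; moreover either α or −α occurs among the roots a_i. -/

import Mathlib

lemma stmt3_aux (n : ℕ) (L : Fin n → ℝ) (hsum : ∑ i, L i = 0)
    (hkey : (∑ i, |L i|) ^ 2 = 2 * ∑ i, L i ^ 2)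
    (iw : Fin n) (hw : L iw ≠ 0) :
    ∃ m : ℝ, 0 < m ∧ ∃ j0 j1 : Fin n, j0 ≠ j1 ∧ L j0 = m ∧ L j1 = -m ∧
      (∀ k, k ≠ j0 → k ≠ j1 → L k = 0) ∧ (∀ k, L k = m → k = j0) := by
  classical
  obtain ⟨i0, -, hmax⟩ := Finset.univ.exists_max_image (fun i => |L i|) ⟨iw, Finset.mem_univ iw⟩
  simp only [Finset.mem_univ, forall_const] at hmax
  set m := |L i0| with hmdef
  have hm : 0 < m := lt_of_lt_of_le (abs_pos.mpr hw) (hmax iw)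
  set S := ∑ i, |L i| with hSdef
  -- S ≥ 2 m
  have h1 : ∑ i ∈ Finset.univ.erase i0, L i = - L i0 := by
    rw [Finset.sum_erase_eq_sub (Finset.mem_univ i0), hsum, zero_sub]
  have h2 : m ≤ ∑ i ∈ Finset.univ.erase i0, |L i| := by
    calc m = |∑ i ∈ Finset.univ.erase i0, L i| := by rw [h1, abs_neg]
    _ ≤ ∑ i ∈ Finset.univ.erase i0, |L i| := Finset.abs_sum_le_sum_abs _ _
  have h3 : S = m + ∑ i ∈ Finset.univ.erase i0, |L i| :=
    (Finset.add_sum_erase Finset.univ (fun i => |L i|) (Finset.mem_univ i0)).symm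
  have hB : 2 * m ≤ S := by linarith
  -- ∑ L² ≤ m S
  have hA : ∑ i, L i ^ 2 ≤ m * S := by
    rw [hSdef, Finset.mul_sum]
    refine Finset.sum_le_sum fun i _ => ?_
    have := hmax i
    nlinarith [abs_nonneg (L i), sq_abs (L i)]
  have hSeq : S = 2 * m := by nlinarith
  have hsumsq : ∑ i, L i ^ 2 = 2 * m ^ 2 := by nlinarith
  -- each |L i| ∈ {0, m}
  have habs : ∀ i, |L i| = 0 ∨ |L i| = m := by
    have hz : ∑ i, (m * |L i| - L i ^ 2) = 0 := by
      rw [Finset.sum_sub_distrib, ← Finset.mul_sum, ← hSdef, hSeq, hsumsq]; ring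
    have hnn : ∀ i ∈ Finset.univ, (0:ℝ) ≤ m * |L i| - L i ^ 2 := by
      intro i _
      have := hmax i
      nlinarith [abs_nonneg (L i), sq_abs (L i)]
    have hall := (Finset.sum_eq_zero_iff_of_nonneg hnn).mp hz
    intro i
    have h := hall i (Finset.mem_univ i)
    have h2 : |L i| * (m - |L i|) = 0 := by linear_combination h - sq_abs (L i)
    rcases mul_eq_zero.mp h2 with h | h
    · exact Or.inl h
    · exact Or.inr (by linarith)
  -- counting
  set P := Finset.univ.filter (fun i => L i = m) with hPdef
  set N := Finset.univ.filter (fun i => L i = -m) with hNdef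
  have hPmem : ∀ i, i ∈ P ↔ L i = m := by intro i; simp [hPdef]
  have hNmem : ∀ i, i ∈ N ↔ L i = -m := by intro i; simp [hNdef]
  have hdisj : Disjoint P N := by
    rw [Finset.disjoint_left]
    intro i hiP hiN
    rw [hPmem] at hiP; rw [hNmem] at hiN; linarith
  have hzero : ∀ i, i ∉ P → i ∉ N → L i = 0 := by
    intro i hp hn
    rcases habs i with h | h
    · exact abs_eq_zero.mp h
    · rcases (abs_eq hm.le).mp h with h | h
      · exact absurd ((hPmem i).mpr h) hp
      · exact absurd ((hNmem i).mpr h) hn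
  have hsum_eq : ∑ i, L i = ∑ i ∈ P ∪ N, L i := by
    symm
    apply Finset.sum_subset (Finset.subset_univ _)
    intro i _ hi
    rw [Finset.mem_union] at hi
    push_neg at hi
    exact hzero i hi.1 hi.2
  have habs_eq : S = ∑ i ∈ P ∪ N, |L i| := by
    rw [hSdef]
    symm
    apply Finset.sum_subset (Finset.subset_univ _)
    intro i _ hi
    rw [Finset.mem_union] at hi
    push_neg at hi
    rw [hzero i hi.1 hi.2, abs_zero]
  have hPsumL : ∑ i ∈ P, L i = P.card * m := by
    rw [Finset.sum_congr rfl (fun i hi => (hPmem i).mp hi), Finset.sum_const, nsmul_eq_mul]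
  have hNsumL : ∑ i ∈ N, L i = N.card * (-m) := by
    rw [Finset.sum_congr rfl (fun i hi => (hNmem i).mp hi), Finset.sum_const, nsmul_eq_mul]
  have hPsumA : ∑ i ∈ P, |L i| = P.card * m := by
    rw [Finset.sum_congr rfl (fun i hi => by rw [(hPmem i).mp hi, abs_of_pos hm]),
      Finset.sum_const, nsmul_eq_mul]
  have hNsumA : ∑ i ∈ N, |L i| = N.card * m := by
    rw [Finset.sum_congr rfl (fun i hi => by rw [(hNmem i).mp hi, abs_neg, abs_of_pos hm]),
      Finset.sum_const, nsmul_eq_mul]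
  have e1 : (P.card : ℝ) * m + N.card * (-m) = 0 := by
    rw [← hPsumL, ← hNsumL, ← Finset.sum_union hdisj, ← hsum_eq, hsum]
  have e2 : (P.card : ℝ) * m + N.card * m = 2 * m := by
    rw [← hPsumA, ← hNsumA, ← Finset.sum_union hdisj, ← habs_eq, hSeq]
  have hPc : P.card = 1 := by
    have hc1 : (P.card : ℝ) = 1 := by
      have := mul_right_cancel₀ hm.ne' (show (P.card : ℝ) * m = 1 * m by linarith)
      linarith
    exact_mod_cast hc1
  have hNc : N.card = 1 := by
    have hc1 : (N.card : ℝ) = 1 := by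
      have := mul_right_cancel₀ hm.ne' (show (N.card : ℝ) * m = 1 * m by linarith)
      linarith
    exact_mod_cast hc1
  obtain ⟨j0, hj0⟩ := Finset.card_eq_one.mp hPc
  obtain ⟨j1, hj1⟩ := Finset.card_eq_one.mp hNc
  have hLj0 : L j0 = m := (hPmem j0).mp (by rw [hj0]; exact Finset.mem_singleton_self j0)
  have hLj1 : L j1 = -m := (hNmem j1).mp (by rw [hj1]; exact Finset.mem_singleton_self j1)
  refine ⟨m, hm, j0, j1, ?_, hLj0, hLj1, ?_, ?_⟩
  · intro h
    rw [h, hLj1] at hLj0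
    linarith
  · intro k h0 h1
    refine hzero k (fun hk => h0 ?_) (fun hk => h1 ?_)
    · rw [hj0] at hk; exact Finset.mem_singleton.mp hk
    · rw [hj1] at hk; exact Finset.mem_singleton.mp hk
  · intro k hk
    have : k ∈ P := (hPmem k).mpr hk
    rw [hj0] at this
    exact Finset.mem_singleton.mp this


/-- If `p(X) = ∏ (X - aᵢ)` has real coefficients, `∏ aᵢ = 1`, the upper Mahler–Length bound
is an equality, and some root has modulus `≠ 1`, then there is `α > 1` such that the multiset
of root moduli is `{α, α⁻¹, 1, …, 1}` and `α` or `-α` occurs among the roots. -/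
theorem stmt_3 (n : ℕ) (hn : 2 ≤ n) (a : Fin n → ℂ)
    (hreal : ∀ j : ℕ, ((∏ i, (Polynomial.X - Polynomial.C (a i))).coeff j).im = 0)
    (ha : ∏ i, a i = 1)
    (heq : Real.sqrt (∑ i, 2 * (Real.log (‖a i‖)) ^ 2) =
      2 * Real.log (∏ i, max 1 (‖a i‖)))
    (hne : ∃ i, ‖a i‖ ≠ 1) :
    ∃ α : ℝ, 1 < α ∧
      Multiset.map (fun i => ‖a i‖) Finset.univ.val =
        α ::ₘ α⁻¹ ::ₘ Multiset.replicate (n - 2) 1 ∧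
      ∃ i, a i = (α : ℂ) ∨ a i = (-α : ℂ) := by
  classical
  have ha0 : ∀ i, a i ≠ 0 := by
    intro i h
    rw [Finset.prod_eq_zero (Finset.mem_univ i) h] at ha
    exact one_ne_zero ha.symm
  have hrpos : ∀ i, 0 < ‖a i‖ := fun i => (norm_pos_iff.mpr (ha0 i))
  -- sum of logs is zero
  have hsumL : ∑ i, Real.log (‖a i‖) = 0 := by
    have h1 : ∏ i, ‖a i‖ = 1 := by rw [← Complex.norm_prod, ha, norm_one]
    rw [← Real.log_prod (fun i _ => (hrpos i).ne'), h1, Real.log_one]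
  -- the key quadratic equality
  have hkey : (∑ i, |Real.log (‖a i‖)|) ^ 2
      = 2 * ∑ i, Real.log (‖a i‖) ^ 2 := by
    have hmaxlog : ∀ i : Fin n, Real.log (max 1 (‖a i‖))
        = max 0 (Real.log (‖a i‖)) := by
      intro i
      rcases le_total (‖a i‖) 1 with h | h
      · rw [max_eq_left h, Real.log_one,
          eq_comm, max_eq_left (Real.log_nonpos (hrpos i).le h)]
      · rw [max_eq_right h, eq_comm, max_eq_right (Real.log_nonneg h)]
    have hT : Real.log (∏ i, max 1 (‖a i‖))
        = ∑ i, max 0 (Real.log (‖a i‖)) := by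
      rw [Real.log_prod (fun i _ => by positivity)]
      exact Finset.sum_congr rfl fun i _ => hmaxlog i
    have hS2T : ∑ i, |Real.log (‖a i‖)|
        = 2 * ∑ i, max 0 (Real.log (‖a i‖)) := by
      have h1 : ∀ x : ℝ, |x| = 2 * max 0 x - x := by
        intro x
        rcases le_total 0 x with h | h
        · rw [abs_of_nonneg h, max_eq_right h]; ring
        · rw [abs_of_nonpos h, max_eq_left h]; ring
      calc ∑ i, |Real.log (‖a i‖)|
          = ∑ i, (2 * max 0 (Real.log (‖a i‖)) - Real.log (‖a i‖)) :=
            Finset.sum_congr rfl fun i _ => h1 _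
        _ = 2 * ∑ i, max 0 (Real.log (‖a i‖))
            - ∑ i, Real.log (‖a i‖) := by
            rw [Finset.sum_sub_distrib, Finset.mul_sum]
        _ = 2 * ∑ i, max 0 (Real.log (‖a i‖)) := by rw [hsumL, sub_zero]
    have h0 : (0:ℝ) ≤ ∑ i, 2 * Real.log (‖a i‖) ^ 2 :=
      Finset.sum_nonneg fun i _ => by positivity
    calc (∑ i, |Real.log (‖a i‖)|) ^ 2
        = Real.sqrt (∑ i, 2 * Real.log (‖a i‖) ^ 2) ^ 2 := by
          rw [heq, hT, ← hS2T]
      _ = ∑ i, 2 * Real.log (‖a i‖) ^ 2 := Real.sq_sqrt h0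
      _ = 2 * ∑ i, Real.log (‖a i‖) ^ 2 := by rw [Finset.mul_sum]
  obtain ⟨iw, hiw⟩ := hne
  have hw : Real.log (‖a iw‖) ≠ 0 := by
    intro h
    rcases Real.log_eq_zero.mp h with h | h | h
    · exact (hrpos iw).ne' h
    · exact hiw h
    · linarith [hrpos iw]
  obtain ⟨m, hm, j0, j1, hne01, hLj0, hLj1, hzero, huniq⟩ :=
    stmt3_aux n (fun i => Real.log (‖a i‖)) hsumL hkey iw hw
  set α := Real.exp m with hαdef
  have hα : 1 < α := by
    calc (1:ℝ) = Real.exp 0 := Real.exp_zero.symm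
    _ < Real.exp m := Real.exp_lt_exp.mpr hm
  have hexp : ∀ i, Real.exp (Real.log (‖a i‖)) = ‖a i‖ :=
    fun i => Real.exp_log (hrpos i)
  have hrj0 : ‖a j0‖ = α := by rw [← hexp j0, hLj0]
  have hrj1 : ‖a j1‖ = α⁻¹ := by rw [← hexp j1, hLj1, Real.exp_neg]
  have hr1 : ∀ k, k ≠ j0 → k ≠ j1 → ‖a k‖ = 1 := by
    intro k h0 h1
    rw [← hexp k, hzero k h0 h1, Real.exp_zero]
  refine ⟨α, hα, ?_, ?_⟩
  · -- multiset of moduli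
    have hnd : (Finset.univ.val : Multiset (Fin n)).Nodup := Finset.univ.nodup
    have hmem0 : j0 ∈ (Finset.univ.val : Multiset (Fin n)) :=
      Finset.mem_val.mpr (Finset.mem_univ j0)
    have hmem1 : j1 ∈ (Finset.univ.val : Multiset (Fin n)).erase j0 :=
      (Multiset.mem_erase_of_ne (Ne.symm hne01)).mpr (Finset.mem_val.mpr (Finset.mem_univ j1))
    have hsplit : (Finset.univ.val : Multiset (Fin n))
        = j0 ::ₘ j1 ::ₘ ((Finset.univ.val : Multiset (Fin n)).erase j0).erase j1 := by
      rw [Multiset.cons_erase hmem1, Multiset.cons_erase hmem0]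
    have hcard_u : Multiset.card (((Finset.univ.val : Multiset (Fin n)).erase j0).erase j1)
        = n - 2 := by
      rw [Multiset.card_erase_of_mem hmem1, Multiset.card_erase_of_mem hmem0]
      have : Multiset.card (Finset.univ.val : Multiset (Fin n)) = n := by
        simpa using Finset.card_univ (α := Fin n)
      rw [this]
      simp only [Nat.pred_eq_sub_one]
      omega
    have hmap_u : Multiset.map (fun i => ‖a i‖)
        (((Finset.univ.val : Multiset (Fin n)).erase j0).erase j1)
        = Multiset.replicate (n - 2) 1 := by
      rw [Multiset.eq_replicate]
      constructor
      · rw [Multiset.card_map, hcard_u]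
      · intro b hb
        obtain ⟨k, hk, rfl⟩ := Multiset.mem_map.mp hb
        have hk1 := (hnd.erase j0).mem_erase_iff.mp hk
        have hk0 := (hnd.mem_erase_iff.mp hk1.2).1
        exact hr1 k hk0 hk1.1
    rw [hsplit, Multiset.map_cons, Multiset.map_cons, hrj0, hrj1, hmap_u]
  · -- real root ±α
    have hp : (∏ i, (Polynomial.X - Polynomial.C (a i))).map (starRingEnd ℂ)
        = ∏ i, (Polynomial.X - Polynomial.C (a i)) := by
      ext j
      rw [Polynomial.coeff_map]
      exact Complex.conj_eq_iff_im.mpr (hreal j)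
    have hprodform : (∏ i, (Polynomial.X - Polynomial.C (a i)))
        = ((Finset.univ.val.map a).map (fun x => Polynomial.X - Polynomial.C x)).prod := by
      rw [Multiset.map_map]; rfl
    have hroots : (∏ i, (Polynomial.X - Polynomial.C (a i))).roots = Finset.univ.val.map a := by
      rw [hprodform, Polynomial.roots_multiset_prod_X_sub_C]
    have hsplits : (∏ i, (Polynomial.X - Polynomial.C (a i))).Splits :=
      Polynomial.Splits.prod (fun i _ => Polynomial.Splits.X_sub_C _)
    have hconj : Multiset.map (⇑(starRingEnd ℂ)) (Finset.univ.val.map a)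
        = Finset.univ.val.map a := by
      conv_lhs => rw [← hroots]
      rw [← hsplits.roots_map, hp, hroots]
    have hmemc : (starRingEnd ℂ) (a j0) ∈ Finset.univ.val.map a := by
      rw [← hconj]
      exact Multiset.mem_map_of_mem _
        (Multiset.mem_map_of_mem a (Finset.mem_val.mpr (Finset.mem_univ j0)))
    obtain ⟨k, -, hk⟩ := Multiset.mem_map.mp hmemc
    have hrk : ‖a k‖ = ‖a j0‖ := by
      rw [hk]; exact Complex.norm_conj _
    have hLk : Real.log (‖a k‖) = m := by
      rw [hrk, hrj0, hαdef, Real.log_exp]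
    have hkj0 : k = j0 := huniq k hLk
    have hcj : (starRingEnd ℂ) (a j0) = a j0 := by rw [← hk, hkj0]
    have him : (a j0).im = 0 := Complex.conj_eq_iff_im.mp hcj
    have hre : a j0 = ((a j0).re : ℂ) := by
      apply Complex.ext <;> simp [him]
    have habsre : |(a j0).re| = α := by
      have h := hrj0
      rw [hre, Complex.norm_real, Real.norm_eq_abs] at h
      exact h
    rcases (abs_eq (by linarith : (0:ℝ) ≤ α)).mp habsre with h | h
    · exact ⟨j0, Or.inl (by rw [hre, h])⟩
    · refine ⟨j0, Or.inr ?_⟩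
      rw [hre, h]
      push_cast
      ring
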